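/- For |A| > 1, two closed conditional expressions are provably equal in CP_cr if and only if they have the same reply and apply behavior on all states f : A^cr → {T,F}, where A^cr is the set of nonempty strings over A with no two consecutive equal atoms, and (a • f)(σ) = f(σ) if σ begins with a, and f(aσ) otherwise. -/

import Mathlib

inductive CE (A : Type) : Type
  | tt : CE A
  | ff : CE A
  | atom : A → CE A
  | cond : CE A → CE A → CE A → CE A

inductive Deriv {A : Type} (Ax : CE A → CE A → Prop) : CE A → CE A → Prop
  | ax {t t'} : Ax t t' → Deriv Ax t t'
  | refl (t) : Deriv Ax t t
  | symm {t t'} : Deriv Ax t t' → Deriv Ax t' t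
  | trans {t t' t''} : Deriv Ax t t' → Deriv Ax t' t'' → Deriv Ax t t''
  | congr {x x' y y' z z'} : Deriv Ax x x' → Deriv Ax y y' → Deriv Ax z z' →
      Deriv Ax (.cond x y z) (.cond x' y' z')
  | cp1 (x y) : Deriv Ax (.cond x .tt y) x
  | cp2 (x y) : Deriv Ax (.cond x .ff y) y
  | cp3 (x) : Deriv Ax (.cond .tt x .ff) x
  | cp4 (x y z u v) : Deriv Ax (.cond x (.cond y z u) v) (.cond (.cond x y v) z (.cond x u v))

/-- Derivability from the CP axioms alone (no extra axioms). -/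
def CP {A : Type} : CE A → CE A → Prop := Deriv (fun _ _ => False)

/-- The axiom schemes (CPcr1) and (CPcr2), for each atom a. -/
def AxCr {A : Type} : CE A → CE A → Prop := fun s t =>
  (∃ (a : A) (x y z : CE A),
      s = .cond (.cond x (.atom a) y) (.atom a) z ∧ t = .cond x (.atom a) z) ∨
  (∃ (a : A) (x y z : CE A),
      s = .cond x (.atom a) (.cond y (.atom a) z) ∧ t = .cond x (.atom a) z)

/-- A^cr: nonempty strings over A in which no two consecutive atoms are equal. -/
def CrStr (A : Type) := {l : List A // l ≠ [] ∧ l.Chain' (· ≠ ·)}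

/-- States for contractive congruence: all functions A^cr → {T,F}. -/
def StateC (A : Type) := CrStr A → Bool

/-- Prepending an atom to a string in A^cr, absorbing a repeated first atom. -/
def acons {A : Type} [DecidableEq A] (a : A) (l : CrStr A) : CrStr A :=
  if h : l.1.head? = some a then l
  else ⟨a :: l.1, ⟨List.cons_ne_nil _ _, List.isChain_cons.mpr
    ⟨fun b hb hab => h (by rw [Option.mem_def] at hb; rw [hb, hab]), l.2.2⟩⟩⟩

mutual
/-- The reply  in state . -/
def replyC {A : Type} [DecidableEq A] : CE A → StateC A → Bool
  | .tt, _ => true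
  | .ff, _ => false
  | .atom a, f => f ⟨[a], by simp [List.Chain']⟩
  | .cond x y z, f => if replyC y f then replyC x (applyC y f) else replyC z (applyC y f)

/-- The state transformation : (a • f)(σ) = f(σ) if σ begins with a,
and f(aσ) otherwise. -/
def applyC {A : Type} [DecidableEq A] : CE A → StateC A → StateC A
  | .tt, f => f
  | .ff, f => f
  | .atom a, f => fun l => f (acons a l)
  | .cond x y z, f => if replyC y f then applyC x (applyC y f) else applyC z (applyC y f)
end

theorem cr_single {A : Type} (a : A) : [a] ≠ [] ∧ List.Chain' (· ≠ ·) [a] := by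
  simp [List.Chain']

section Basics
variable {A : Type} [DecidableEq A]

@[simp] lemma replyC_tt (f : StateC A) : replyC .tt f = true := rfl
@[simp] lemma replyC_ff (f : StateC A) : replyC .ff f = false := rfl
@[simp] lemma replyC_atom (a : A) (f : StateC A) :
    replyC (.atom a) f = f ⟨[a], cr_single _⟩ := rfl
@[simp] lemma replyC_cond (x y z : CE A) (f : StateC A) :
    replyC (.cond x y z) f =
      if replyC y f then replyC x (applyC y f) else replyC z (applyC y f) := rfl
@[simp] lemma applyC_tt (f : StateC A) : applyC .tt f = f := rfl
@[simp] lemma applyC_ff (f : StateC A) : applyC .ff f = f := rfl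
@[simp] lemma applyC_atom (a : A) (f : StateC A) :
    applyC (.atom a) f = fun l => f (acons a l) := rfl
@[simp] lemma applyC_cond (x y z : CE A) (f : StateC A) :
    applyC (.cond x y z) f =
      if replyC y f then applyC x (applyC y f) else applyC z (applyC y f) := rfl

/-- `a • f`. -/
def ins (a : A) (f : StateC A) : StateC A := fun σ => f (acons a σ)

lemma acons_head (a : A) (σ : CrStr A) : (acons a σ).1.head? = some a := by
  by_cases h : σ.1.head? = some a
  · exact (congrArg (fun s : CrStr A => s.1.head?) (dif_pos h : acons a σ = _)).trans h
  · exact (congrArg (fun s : CrStr A => s.1.head?) (dif_neg h : acons a σ = _)).trans rfl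

lemma acons_self {a : A} {σ : CrStr A} (h : σ.1.head? = some a) : acons a σ = σ := by
  unfold acons; exact dif_pos h

lemma ins_ins (a : A) (f : StateC A) : ins a (ins a f) = ins a f := by
  funext σ; simp only [ins]; rw [acons_self (acons_head a σ)]

lemma ins_single (a : A) (f : StateC A) :
    ins a f ⟨[a], cr_single _⟩ = f ⟨[a], cr_single _⟩ := by
  simp only [ins]; exact congrArg f (acons_self (by rfl))

lemma applyC_atom' (a : A) (f : StateC A) : applyC (.atom a) f = ins a f := rfl

lemma sound {t t' : CE A} (h : Deriv AxCr t t') :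
    ∀ f, replyC t f = replyC t' f ∧ applyC t f = applyC t' f := by
  induction h with
  | ax h =>
    rcases h with ⟨a, x, y, z, rfl, rfl⟩ | ⟨a, x, y, z, rfl, rfl⟩ <;> intro f <;>
      constructor <;>
        simp only [replyC_cond, applyC_cond, replyC_atom, applyC_atom', ins_ins, ins_single] <;>
        by_cases hb : f ⟨[a], cr_single _⟩ = true <;> simp [hb]
  | refl t => intro f; exact ⟨rfl, rfl⟩
  | symm _ ih => intro f; exact ⟨(ih f).1.symm, (ih f).2.symm⟩
  | trans _ _ ih1 ih2 =>
    intro f; exact ⟨(ih1 f).1.trans (ih2 f).1, (ih1 f).2.trans (ih2 f).2⟩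
  | congr _ _ _ ihx ihy ihz =>
    intro f
    constructor <;> simp only [replyC_cond, applyC_cond, (ihy f).1, (ihy f).2] <;>
      cases replyC _ f <;> simp [(ihx _).1, (ihz _).1, (ihx _).2, (ihz _).2]
  | cp1 x y => intro f; constructor <;> simp
  | cp2 x y => intro f; constructor <;> simp
  | cp3 x => intro f; constructor <;> simp <;> cases replyC x f <;> simp
  | cp4 x y z u v =>
    intro f; constructor <;>
      simp only [replyC_cond, applyC_cond] <;>
      split_ifs <;> simp_all

end Basics
/-- Basic forms: decision trees whose internal nodes are atoms. -/
inductive BF (A : Type) : Type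
  | tt : BF A
  | ff : BF A
  | node (a : A) (l r : BF A) : BF A

namespace BF

def toCE {A : Type} : BF A → CE A
  | .tt => .tt
  | .ff => .ff
  | .node a l r => .cond l.toCE (.atom a) r.toCE

def root {A : Type} : BF A → Option A
  | .node a _ _ => some a
  | _ => none

/-- Contractive basic forms. -/
def Contr {A : Type} : BF A → Prop
  | .tt => True
  | .ff => True
  | .node a l r => l.root ≠ some a ∧ r.root ≠ some a ∧ l.Contr ∧ r.Contr

end BF

section BFsem
variable {A : Type} [DecidableEq A]

def replyB : BF A → StateC A → Bool
  | .tt, _ => true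
  | .ff, _ => false
  | .node a l r, f => if f ⟨[a], cr_single _⟩ then replyB l (ins a f) else replyB r (ins a f)

def applyB : BF A → StateC A → StateC A
  | .tt, f => f
  | .ff, f => f
  | .node a l r, f => if f ⟨[a], cr_single _⟩ then applyB l (ins a f) else applyB r (ins a f)

@[simp] lemma replyB_tt (f : StateC A) : replyB .tt f = true := rfl
@[simp] lemma replyB_ff (f : StateC A) : replyB .ff f = false := rfl
@[simp] lemma replyB_node (a : A) (l r : BF A) (f : StateC A) :
    replyB (.node a l r) f =
      if f ⟨[a], cr_single _⟩ then replyB l (ins a f) else replyB r (ins a f) := rfl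
@[simp] lemma applyB_tt (f : StateC A) : applyB .tt f = f := rfl
@[simp] lemma applyB_ff (f : StateC A) : applyB .ff f = f := rfl
@[simp] lemma applyB_node (a : A) (l r : BF A) (f : StateC A) :
    applyB (.node a l r) f =
      if f ⟨[a], cr_single _⟩ then applyB l (ins a f) else applyB r (ins a f) := rfl

lemma toCE_sem (b : BF A) : ∀ f : StateC A,
    replyC b.toCE f = replyB b f ∧ applyC b.toCE f = applyB b f := by
  induction b with
  | tt => intro f; exact ⟨rfl, rfl⟩
  | ff => intro f; exact ⟨rfl, rfl⟩
  | node a l r ihl ihr =>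
    intro f
    constructor <;>
      simp only [BF.toCE, replyC_cond, applyC_cond, replyC_atom, applyC_atom',
        replyB_node, applyB_node] <;>
      by_cases hb : f ⟨[a], cr_single _⟩ = true <;>
        simp [hb, (ihl _).1, (ihl _).2, (ihr _).1, (ihr _).2]

end BFsem

section Norm
variable {A : Type} [DecidableEq A]

def mix {A : Type} (x z : BF A) : BF A → BF A
  | .tt => x
  | .ff => z
  | .node a l r => .node a (mix x z l) (mix x z r)

def norm {A : Type} : CE A → BF A
  | .tt => .tt
  | .ff => .ff
  | .atom a => .node a .tt .ff
  | .cond x y z => mix (norm x) (norm z) (norm y)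

lemma deriv_mix (x z : CE A) (bx bz : BF A)
    (hx : Deriv AxCr x bx.toCE) (hz : Deriv AxCr z bz.toCE) :
    ∀ b : BF A, Deriv AxCr (.cond x b.toCE z) (mix bx bz b).toCE := by
  intro b
  induction b with
  | tt => exact (Deriv.cp1 x z).trans hx
  | ff => exact (Deriv.cp2 x z).trans hz
  | node a l r ihl ihr =>
    exact (Deriv.cp4 x l.toCE (.atom a) r.toCE z).trans
      (Deriv.congr ihl (Deriv.refl _) ihr)

lemma deriv_norm : ∀ t : CE A, Deriv AxCr t (norm t).toCE
  | .tt => Deriv.refl _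
  | .ff => Deriv.refl _
  | .atom a => (Deriv.cp3 (.atom a)).symm
  | .cond x y z =>
    (Deriv.congr (Deriv.refl x) (deriv_norm y) (Deriv.refl z)).trans
      (deriv_mix x z _ _ (deriv_norm x) (deriv_norm z) (norm y))

def takeL {A : Type} [DecidableEq A] (a : A) : BF A → BF A
  | .node b l r => if b = a then takeL a l else .node b l r
  | t => t

def takeR {A : Type} [DecidableEq A] (a : A) : BF A → BF A
  | .node b l r => if b = a then takeR a r else .node b l r
  | t => t

def ctr {A : Type} [DecidableEq A] : BF A → BF A
  | .node a l r => .node a (takeL a (ctr l)) (takeR a (ctr r))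
  | t => t

lemma takeL_spec (a : A) : ∀ b : BF A, b.Contr →
    (takeL a b).Contr ∧ (takeL a b).root ≠ some a := by
  intro b
  induction b with
  | tt => intro _; exact ⟨trivial, by simp [takeL, BF.root]⟩
  | ff => intro _; exact ⟨trivial, by simp [takeL, BF.root]⟩
  | node c l r ihl ihr =>
    intro hc
    by_cases hca : c = a
    · subst hca
      rw [takeL, if_pos rfl]
      exact ihl hc.2.2.1
    · rw [takeL, if_neg hca]
      exact ⟨hc, by simp [BF.root]; exact hca⟩

lemma takeR_spec (a : A) : ∀ b : BF A, b.Contr →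
    (takeR a b).Contr ∧ (takeR a b).root ≠ some a := by
  intro b
  induction b with
  | tt => intro _; exact ⟨trivial, by simp [takeR, BF.root]⟩
  | ff => intro _; exact ⟨trivial, by simp [takeR, BF.root]⟩
  | node c l r ihl ihr =>
    intro hc
    by_cases hca : c = a
    · subst hca
      rw [takeR, if_pos rfl]
      exact ihr hc.2.2.2
    · rw [takeR, if_neg hca]
      exact ⟨hc, by simp [BF.root]; exact hca⟩

lemma ctr_contr : ∀ b : BF A, (ctr b).Contr := by
  intro b
  induction b with
  | tt => trivial
  | ff => trivial
  | node a l r ihl ihr =>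
    rw [ctr]
    exact ⟨(takeL_spec a _ ihl).2, (takeR_spec a _ ihr).2,
      (takeL_spec a _ ihl).1, (takeR_spec a _ ihr).1⟩

lemma deriv_takeL (a : A) : ∀ b r : BF A,
    Deriv AxCr (BF.node a b r).toCE (BF.node a (takeL a b) r).toCE := by
  intro b
  induction b with
  | tt => intro r; exact Deriv.refl _
  | ff => intro r; exact Deriv.refl _
  | node c l' r' ihl ihr =>
    intro r
    by_cases hca : c = a
    · subst hca
      have ax1 : Deriv AxCr
          (CE.cond (.cond l'.toCE (.atom c) r'.toCE) (.atom c) r.toCE)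
          (CE.cond l'.toCE (.atom c) r.toCE) :=
        Deriv.ax (Or.inl ⟨c, l'.toCE, r'.toCE, r.toCE, rfl, rfl⟩)
      have : takeL c (BF.node c l' r') = takeL c l' := by rw [takeL, if_pos rfl]
      rw [this]
      exact ax1.trans (ihl r)
    · rw [takeL, if_neg hca]
      exact Deriv.refl _

lemma deriv_takeR (a : A) : ∀ b l : BF A,
    Deriv AxCr (BF.node a l b).toCE (BF.node a l (takeR a b)).toCE := by
  intro b
  induction b with
  | tt => intro l; exact Deriv.refl _
  | ff => intro l; exact Deriv.refl _
  | node c l' r' ihl ihr =>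
    intro l
    by_cases hca : c = a
    · subst hca
      have ax1 : Deriv AxCr
          (CE.cond l.toCE (.atom c) (.cond l'.toCE (.atom c) r'.toCE))
          (CE.cond l.toCE (.atom c) r'.toCE) :=
        Deriv.ax (Or.inr ⟨c, l.toCE, l'.toCE, r'.toCE, rfl, rfl⟩)
      have : takeR c (BF.node c l' r') = takeR c r' := by rw [takeR, if_pos rfl]
      rw [this]
      exact ax1.trans (ihr l)
    · rw [takeR, if_neg hca]
      exact Deriv.refl _

lemma deriv_ctr : ∀ b : BF A, Deriv AxCr b.toCE (ctr b).toCE := by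
  intro b
  induction b with
  | tt => exact Deriv.refl _
  | ff => exact Deriv.refl _
  | node a l r ihl ihr =>
    have h1 : Deriv AxCr (BF.node a l r).toCE (BF.node a (ctr l) (ctr r)).toCE :=
      Deriv.congr ihl (Deriv.refl _) ihr
    exact (h1.trans (deriv_takeL a (ctr l) (ctr r))).trans
      (deriv_takeR a (ctr r) (takeL a (ctr l)))

end Norm
section Pcons
variable {A : Type} [DecidableEq A]

def pcons (q : List A) (σ : CrStr A) : CrStr A := q.foldr acons σ

def stq (q : List A) (f : StateC A) : StateC A := fun σ => f (pcons q σ)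

@[simp] lemma stq_nil (f : StateC A) : stq [] f = f := rfl

lemma stq_snoc (q : List A) (a : A) (f : StateC A) :
    ins a (stq q f) = stq (q ++ [a]) f := by
  funext σ
  simp only [ins, stq, pcons, List.foldr_append, List.foldr]

lemma pcons_spec : ∀ (q : List A), q.Chain' (· ≠ ·) → ∀ σ : CrStr A,
    (pcons q σ).1 = if σ.1.head? = q.getLast? then q.dropLast ++ σ.1 else q ++ σ.1 := by
  intro q
  induction q with
  | nil =>
    intro _ σ
    rw [if_neg]
    · rfl
    · simp only [List.getLast?_nil]
      intro h
      exact σ.2.1 (List.head?_eq_none_iff.mp h)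
  | cons a q ih =>
    intro hch σ
    have hch' : q.Chain' (· ≠ ·) := (List.isChain_cons.mp hch).2
    cases q with
    | nil =>
      show (acons a σ).1 = _
      by_cases h : σ.1.head? = some a
      · rw [if_pos (by simpa using h)]
        exact congrArg Subtype.val (dif_pos h : acons a σ = _)
      · rw [if_neg (by simpa using h)]
        exact congrArg Subtype.val (dif_neg h : acons a σ = _)
    | cons b q' =>
      have hab : a ≠ b := List.isChain_cons_cons.mp hch |>.1
      have hτ : (pcons (b :: q') σ).1 =
          if σ.1.head? = (b :: q').getLast? then (b :: q').dropLast ++ σ.1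
          else (b :: q') ++ σ.1 := ih hch' σ
      have hhead : (pcons (b :: q') σ).1.head? = some b := by
        rw [hτ]
        split
        · cases q' with
          | nil =>
            rename_i h
            simpa using h
          | cons c q'' => rfl
        · rfl
      have hacons : (acons a (pcons (b :: q') σ)).1 = a :: (pcons (b :: q') σ).1 := by
        exact congrArg Subtype.val (dif_neg (by rw [hhead]; simp; exact fun h => hab h.symm) :
          acons a (pcons (b :: q') σ) = _)
      show (acons a (pcons (b :: q') σ)).1 = _
      rw [hacons, hτ, List.getLast?_cons_cons]
      split
      · rfl
      · rfl
end Pcons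
section Distinguish
variable {A : Type} [DecidableEq A]

lemma pcons_of_ne {q : List A} (hq : q.Chain' (· ≠ ·)) {σ : CrStr A}
    (h : σ.1.head? ≠ q.getLast?) : (pcons q σ).1 = q ++ σ.1 := by
  rw [pcons_spec q hq σ, if_neg h]

lemma pcons_last {q : List A} (hq : q.Chain' (· ≠ ·)) (hne : q ≠ []) :
    (pcons q ⟨[q.getLast hne], cr_single _⟩).1 = q := by
  refine (pcons_spec q hq _).trans ?_
  rw [if_pos (by simp [List.getLast?_eq_getLast hne])]
  exact List.dropLast_append_getLast hne

lemma ins_congr {a : A} {g g' : StateC A}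
    (h : ∀ σ : CrStr A, σ.1.head? = some a → g σ = g' σ) : ins a g = ins a g' :=
  funext fun σ => h _ (acons_head a σ)

/-- Behaviour of a basic form whose root is not `a` only depends on the values of the
state at strings not starting with `a`. -/
lemma sem_congr {a : A} (b : BF A) (hroot : b.root ≠ some a) {g g' : StateC A}
    (h : ∀ σ : CrStr A, σ.1.head? ≠ some a → g σ = g' σ) :
    replyB b g = replyB b g' ∧ (∀ c, b.root = some c → applyB b g = applyB b g') := by
  cases b with
  | tt => exact ⟨rfl, fun c hc => by simp [BF.root] at hc⟩
  | ff => exact ⟨rfl, fun c hc => by simp [BF.root] at hc⟩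
  | node c l r =>
    have hca : c ≠ a := fun hh => hroot (by simp [BF.root, hh])
    have hgg' : ins c g = ins c g' :=
      ins_congr fun σ hσ => h σ (by rw [hσ]; simp [hca])
    have hc1 : g ⟨[c], cr_single _⟩ = g' ⟨[c], cr_single _⟩ := h _ (by simp [hca])
    constructor
    · simp only [replyB_node, hc1, hgg']
    · intro _ _
      simp only [applyB_node, hc1, hgg']

/-- The final state of a contractive basic form queries the initial state
only at strings starting with the root atom. -/
lemma apply_ins_shape : ∀ (u : BF A), u.Contr → ∀ (a : A), u.root ≠ some a →
    ∀ (f : StateC A) (σ : CrStr A), ∃ τ : CrStr A,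
      τ.1.head? = some a ∧ applyB u (ins a f) σ = f τ := by
  intro u
  induction u with
  | tt => intro _ a _ f σ; exact ⟨acons a σ, acons_head a σ, rfl⟩
  | ff => intro _ a _ f σ; exact ⟨acons a σ, acons_head a σ, rfl⟩
  | node d l r ihl ihr =>
    intro hc a _ f σ
    obtain ⟨hl, hr, hcl, hcr⟩ := hc
    simp only [applyB_node]
    by_cases hfd : (ins a f) ⟨[d], cr_single _⟩ = true
    · rw [if_pos hfd]
      obtain ⟨τ', hτ', heq⟩ := ihl hcl d hl (ins a f) σ
      exact ⟨acons a τ', acons_head a τ', by rw [heq]; rfl⟩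
    · rw [if_neg hfd]
      obtain ⟨τ', hτ', heq⟩ := ihr hcr d hr (ins a f) σ
      exact ⟨acons a τ', acons_head a τ', by rw [heq]; rfl⟩

lemma node_apply_shape {a : A} {l r : BF A} (hc : (BF.node a l r).Contr)
    (f : StateC A) (σ : CrStr A) :
    ∃ τ : CrStr A, τ.1.head? = some a ∧ applyB (.node a l r) f σ = f τ := by
  obtain ⟨hl, hr, hcl, hcr⟩ := hc
  simp only [applyB_node]
  by_cases hfa : f ⟨[a], cr_single _⟩ = true
  · rw [if_pos hfa]; exact apply_ins_shape l hcl a hl f σ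
  · rw [if_neg hfa]; exact apply_ins_shape r hcr a hr f σ

/-- The indicator state of the single string `q`. -/
def f0 (q : List A) : StateC A := fun τ => decide (τ.1 = q)

/-- With the indicator state of `q`, a contractive node whose atom differs from the
last letter of `q` changes the state `q•f0`. -/
lemma L1 {q : List A} (hq : q.Chain' (· ≠ ·)) (hne : q ≠ []) {c : A} {l' r' : BF A}
    (hco : (BF.node c l' r').Contr) (hc : q.getLast? ≠ some c) :
    ∃ σ : CrStr A, stq q (f0 q) σ ≠ applyB (.node c l' r') (stq q (f0 q)) σ := by
  refine ⟨⟨[q.getLast hne], cr_single _⟩, ?_⟩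
  have h1 : stq q (f0 q) ⟨[q.getLast hne], cr_single _⟩ = true := by
    show f0 q (pcons q _) = true
    unfold f0
    rw [pcons_last hq hne]
    simp
  obtain ⟨τ, hτ, h2⟩ := node_apply_shape hco (stq q (f0 q)) ⟨[q.getLast hne], cr_single _⟩
  rw [h1, h2]
  have e1 : (pcons q τ).1 = q ++ τ.1 := pcons_of_ne hq (by rw [hτ]; exact fun h => hc h.symm)
  show _ ≠ f0 q (pcons q τ)
  unfold f0
  rw [e1]
  have hτne : τ.1 ≠ [] := τ.2.1
  have hqτ : ¬ (q ++ τ.1 = q) := by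
    intro h
    have := congrArg List.length h
    simp at this
    exact hτne this
  simp [hqτ]

lemma single_prefix {a : A} {l : List A} : [a] <+: l ↔ l.head? = some a := by
  cases l with
  | nil => simp
  | cons b t => simp [List.cons_prefix_cons, eq_comm]

/-- Two contractive nodes with different root atoms differ on some state. -/
lemma L2 {q : List A} (hq : q.Chain' (· ≠ ·)) {a c : A} {l r l' r' : BF A}
    (hca : q.getLast? ≠ some a) (hcc : q.getLast? ≠ some c) (hac : a ≠ c)
    (hcoa : (BF.node a l r).Contr) (hcoc : (BF.node c l' r').Contr) :
    ∃ (f : StateC A) (σ : CrStr A),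
      applyB (.node a l r) (stq q f) σ ≠ applyB (.node c l' r') (stq q f) σ := by
  refine ⟨fun τ => decide ((q ++ [a]) <+: τ.1), ⟨[a], cr_single _⟩, ?_⟩
  set f : StateC A := fun τ => decide ((q ++ [a]) <+: τ.1) with hf
  obtain ⟨τ, hτ, h1⟩ := node_apply_shape hcoa (stq q f) ⟨[a], cr_single _⟩
  obtain ⟨τ', hτ', h2⟩ := node_apply_shape hcoc (stq q f) ⟨[a], cr_single _⟩
  rw [h1, h2]
  show f (pcons q τ) ≠ f (pcons q τ')
  have e1 : (pcons q τ).1 = q ++ τ.1 := pcons_of_ne hq (by rw [hτ]; exact fun h => hca h.symm)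
  have e2 : (pcons q τ').1 = q ++ τ'.1 := pcons_of_ne hq (by rw [hτ']; exact fun h => hcc h.symm)
  rw [hf]
  simp only [e1, e2, List.prefix_append_right_inj, single_prefix, hτ, hτ']
  intro hcon
  rw [decide_eq_decide] at hcon
  exact hac (Option.some_inj.mp (hcon.mp trivial)).symm
end Distinguish
section Inj
variable {A : Type} [DecidableEq A]

lemma append_ne_self (l : List A) (σ : CrStr A) : l ++ σ.1 ≠ l := by
  intro h
  have := congrArg List.length h
  simp at this
  exact σ.2.1 this

/-- Right-branch analogue of `L1`. -/
lemma L1R {q' : List A} (hq : q'.Chain' (· ≠ ·)) (hne : q' ≠ []) {a d : A}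
    (hlast : q'.getLast? = some a) (hda : d ≠ a) {l2 r2 : BF A}
    (hco : (BF.node d l2 r2).Contr) :
    ∃ σ : CrStr A, stq q' (fun τ => decide ((q' ++ [d]) <+: τ.1)) σ ≠
      applyB (.node d l2 r2) (stq q' (fun τ => decide ((q' ++ [d]) <+: τ.1))) σ := by
  set f1 : StateC A := fun τ => decide ((q' ++ [d]) <+: τ.1) with hf1
  have hnp : ¬ ((q' ++ [d]) <+: q') := by
    intro h
    have := h.length_le
    simp at this
  have hga : q'.getLast hne = a := by
    have := List.getLast?_eq_getLast (l := q') hne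
    rw [hlast] at this
    exact (Option.some_inj.mp this).symm
  refine ⟨⟨[a], cr_single _⟩, ?_⟩
  have h1 : stq q' f1 ⟨[a], cr_single _⟩ = false := by
    show f1 (pcons q' ⟨[a], cr_single _⟩) = false
    have : pcons q' ⟨[a], cr_single _⟩ = pcons q' ⟨[q'.getLast hne], cr_single _⟩ := by
      congr 1
      exact Subtype.ext (by simp [hga])
    rw [hf1, this]
    simp only
    rw [decide_eq_false_iff_not]
    intro h
    exact hnp (by rwa [pcons_last hq hne] at h)
  obtain ⟨τ, hτ, h2⟩ := node_apply_shape hco (stq q' f1) ⟨[a], cr_single _⟩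
  rw [h1, h2]
  have e1 : (pcons q' τ).1 = q' ++ τ.1 :=
    pcons_of_ne hq (by rw [hτ, hlast]; intro h; exact hda (Option.some_inj.mp h))
  show _ ≠ f1 (pcons q' τ)
  rw [hf1]
  simp only
  rw [e1]
  have : (q' ++ [d]) <+: (q' ++ τ.1) := by
    rw [List.prefix_append_right_inj, single_prefix, hτ]
  simp [this]

/-- Comparison of the children of two nodes with the same root atom. -/
lemma child_inj (hA : ∃ x y : A, x ≠ y) {q' : List A} (hq' : q'.Chain' (· ≠ ·))
    (hne' : q' ≠ []) {a : A} (hlast : q'.getLast? = some a)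
    (u u' : BF A) (hu : u.Contr) (hu' : u'.Contr)
    (hra : u.root ≠ some a) (hra' : u'.root ≠ some a)
    (IH : ∀ (b' : BF A) (q : List A), u.Contr → b'.Contr → q.Chain' (· ≠ ·) →
      (∀ c, u.root = some c → q.getLast? ≠ some c) →
      (∀ c, b'.root = some c → q.getLast? ≠ some c) →
      (∀ f, replyB u (stq q f) = replyB b' (stq q f) ∧
            applyB u (stq q f) = applyB b' (stq q f)) →
      u = b')
    (cbit : Bool)
    (hrep : ∀ f, replyB u (stq q' f) = replyB u' (stq q' f))
    (happN : ∀ f, u.root ≠ none → u'.root ≠ none →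
        applyB u (stq q' f) = applyB u' (stq q' f))
    (happC : ∀ f : StateC A, f ⟨q', ⟨hne', hq'⟩⟩ = cbit →
        applyB u (stq q' f) = applyB u' (stq q' f)) :
    u = u' := by
  have hcb : ∀ (d : A) (l2 r2 : BF A), d ≠ a → (BF.node d l2 r2).Contr →
      ∃ f : StateC A, f ⟨q', ⟨hne', hq'⟩⟩ = cbit ∧
        ∃ σ, stq q' f σ ≠ applyB (.node d l2 r2) (stq q' f) σ := by
    intro d l2 r2 hda hco
    cases cbit with
    | true =>
      refine ⟨f0 q', by simp [f0], ?_⟩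
      exact L1 hq' hne' hco (by rw [hlast]; intro h; exact hda (Option.some_inj.mp h).symm)
    | false =>
      refine ⟨fun τ => decide ((q' ++ [d]) <+: τ.1), ?_, ?_⟩
      · simp only
        rw [decide_eq_false_iff_not]
        intro h
        have := h.length_le
        simp at this
      · exact L1R hq' hne' hlast hda hco
  cases u with
  | tt =>
    cases u' with
    | tt => rfl
    | ff => exact absurd (hrep (fun _ => true)) (by simp)
    | node d l2 r2 =>
      exfalso
      have hda : d ≠ a := fun h => hra' (by simp [BF.root, h])
      obtain ⟨f, hfρ, σ, hσ⟩ := hcb d l2 r2 hda hu'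
      exact hσ (congrFun (happC f hfρ) σ)
  | ff =>
    cases u' with
    | tt => exact absurd (hrep (fun _ => true)) (by simp)
    | ff => rfl
    | node d l2 r2 =>
      exfalso
      have hda : d ≠ a := fun h => hra' (by simp [BF.root, h])
      obtain ⟨f, hfρ, σ, hσ⟩ := hcb d l2 r2 hda hu'
      exact hσ (congrFun (happC f hfρ) σ)
  | node d1 l1 r1 =>
    cases u' with
    | tt =>
      exfalso
      have hda : d1 ≠ a := fun h => hra (by simp [BF.root, h])
      obtain ⟨f, hfρ, σ, hσ⟩ := hcb d1 l1 r1 hda hu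
      exact hσ (congrFun (happC f hfρ) σ).symm
    | ff =>
      exfalso
      have hda : d1 ≠ a := fun h => hra (by simp [BF.root, h])
      obtain ⟨f, hfρ, σ, hσ⟩ := hcb d1 l1 r1 hda hu
      exact hσ (congrFun (happC f hfρ) σ).symm
    | node d2 l2 r2 =>
      apply IH _ q' hu hu' hq'
      · intro c hc
        rw [hlast]
        intro h
        exact hra (by rw [hc]; exact congrArg some (Option.some_inj.mp h).symm)
      · intro c hc
        rw [hlast]
        intro h
        exact hra' (by rw [hc]; exact congrArg some (Option.some_inj.mp h).symm)
      · intro f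
        exact ⟨hrep f, happN f (by simp [BF.root]) (by simp [BF.root])⟩
end Inj
section Main
variable {A : Type} [DecidableEq A]

lemma leaf_node_ne {q : List A} (hA : ∃ x y : A, x ≠ y) (hq : q.Chain' (· ≠ ·))
    {c : A} {l' r' : BF A} (hco : (BF.node c l' r').Contr) (hc : q.getLast? ≠ some c) :
    ∃ (f : StateC A) (σ : CrStr A),
      stq q f σ ≠ applyB (.node c l' r') (stq q f) σ := by
  by_cases hne : q = []
  · subst hne
    obtain ⟨x, y, hxy⟩ := hA
    have hdc : (if x = c then y else x) ≠ c := by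
      split
      · rename_i h
        intro hyc
        exact hxy (h.trans hyc.symm)
      · assumption
    set d := if x = c then y else x
    refine ⟨fun τ => decide (τ.1.head? ≠ some c), ⟨[d], cr_single _⟩, ?_⟩
    obtain ⟨τ, hτ, h2⟩ := node_apply_shape hco
      (stq [] (fun τ => decide (τ.1.head? ≠ some c))) ⟨[d], cr_single _⟩
    rw [h2]
    show (fun τ : CrStr A => decide (τ.1.head? ≠ some c)) _ ≠
      (fun τ : CrStr A => decide (τ.1.head? ≠ some c)) _
    simp only
    show decide ((([d] : List A)).head? ≠ some c) ≠ _
    rw [show (pcons [] τ) = τ from rfl, hτ]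
    simp [hdc]
  · obtain ⟨σ, hσ⟩ := L1 hq hne hco hc
    exact ⟨f0 q, σ, hσ⟩

lemma bf_inj (hA : ∃ x y : A, x ≠ y) :
    ∀ (b b' : BF A) (q : List A), b.Contr → b'.Contr → q.Chain' (· ≠ ·) →
    (∀ c, b.root = some c → q.getLast? ≠ some c) →
    (∀ c, b'.root = some c → q.getLast? ≠ some c) →
    (∀ f, replyB b (stq q f) = replyB b' (stq q f) ∧
          applyB b (stq q f) = applyB b' (stq q f)) →
    b = b' := by
  intro b
  induction b with
  | tt =>
    intro b' q hcb hcb' hq hb hb' H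
    cases b' with
    | tt => rfl
    | ff => exact absurd ((H (fun _ => true)).1) (by simp)
    | node c l' r' =>
      exfalso
      obtain ⟨f, σ, hσ⟩ := leaf_node_ne hA hq hcb' (hb' c rfl)
      exact hσ (congrFun (H f).2 σ)
  | ff =>
    intro b' q hcb hcb' hq hb hb' H
    cases b' with
    | tt => exact absurd ((H (fun _ => true)).1) (by simp)
    | ff => rfl
    | node c l' r' =>
      exfalso
      obtain ⟨f, σ, hσ⟩ := leaf_node_ne hA hq hcb' (hb' c rfl)
      exact hσ (congrFun (H f).2 σ)
  | node a l r ihl ihr =>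
    intro b' q hcb hcb' hq hb hb' H
    obtain ⟨hl, hr, hcl, hcr⟩ := hcb
    cases b' with
    | tt =>
      exfalso
      obtain ⟨f, σ, hσ⟩ := leaf_node_ne hA hq ⟨hl, hr, hcl, hcr⟩ (hb a rfl)
      exact hσ (congrFun (H f).2 σ).symm
    | ff =>
      exfalso
      obtain ⟨f, σ, hσ⟩ := leaf_node_ne hA hq ⟨hl, hr, hcl, hcr⟩ (hb a rfl)
      exact hσ (congrFun (H f).2 σ).symm
    | node c l' r' =>
      obtain ⟨hl', hr', hcl', hcr'⟩ := hcb'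
      by_cases hac : a = c
      case neg =>
        exfalso
        obtain ⟨f, σ, hσ⟩ := L2 hq (hb a rfl) (hb' c rfl) hac
          ⟨hl, hr, hcl, hcr⟩ ⟨hl', hr', hcl', hcr'⟩
        exact hσ (congrFun (H f).2 σ)
      case pos =>
        subst hac
        have hqa : q.getLast? ≠ some a := hb a rfl
        have hρch : (q ++ [a]).Chain' (· ≠ ·) := by
          rw [List.Chain', List.isChain_append]
          refine ⟨hq, List.isChain_singleton a, ?_⟩
          intro x hx y hy
          simp only [List.head?_cons, Option.mem_def, Option.some_inj] at hy
          subst hy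
          intro hxa
          exact hqa (by rw [← hxa]; exact hx)
        have hρne : q ++ [a] ≠ [] := by simp
        have hρlast : (q ++ [a]).getLast? = some a := List.getLast?_concat (l := q)
        set ρ : CrStr A := ⟨q ++ [a], ⟨hρne, hρch⟩⟩ with hρdef
        have hcondv : ∀ f : StateC A, stq q f ⟨[a], cr_single _⟩ = f ρ := by
          intro f
          show f (pcons q ⟨[a], cr_single _⟩) = f ρ
          congr 1
          apply Subtype.ext
          exact pcons_of_ne hq (by simp only [List.head?_cons]; intro h; exact hqa h.symm)
        have hbrT : ∀ f : StateC A, f ρ = true →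
            replyB (.node a l r) (stq q f) = replyB l (stq (q ++ [a]) f) ∧
            applyB (.node a l r) (stq q f) = applyB l (stq (q ++ [a]) f) ∧
            replyB (.node a l' r') (stq q f) = replyB l' (stq (q ++ [a]) f) ∧
            applyB (.node a l' r') (stq q f) = applyB l' (stq (q ++ [a]) f) := by
          intro f hfρ
          have hcnd : stq q f ⟨[a], cr_single _⟩ = true := by rw [hcondv f]; exact hfρ
          simp only [replyB_node, applyB_node, hcnd, if_true, stq_snoc]
          refine ⟨?_, ?_, ?_, ?_⟩ <;> trivial
        have hbrF : ∀ f : StateC A, f ρ = false →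
            replyB (.node a l r) (stq q f) = replyB r (stq (q ++ [a]) f) ∧
            applyB (.node a l r) (stq q f) = applyB r (stq (q ++ [a]) f) ∧
            replyB (.node a l' r') (stq q f) = replyB r' (stq (q ++ [a]) f) ∧
            applyB (.node a l' r') (stq q f) = applyB r' (stq (q ++ [a]) f) := by
          intro f hfρ
          have hcnd : stq q f ⟨[a], cr_single _⟩ = false := by rw [hcondv f]; exact hfρ
          simp only [replyB_node, applyB_node, hcnd, if_false, Bool.false_eq_true, stq_snoc]
          refine ⟨?_, ?_, ?_, ?_⟩ <;> trivial
        -- key transfer lemmas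
        have agree : ∀ (f : StateC A) (v : Bool), ∀ σ : CrStr A, σ.1.head? ≠ some a →
            stq (q ++ [a]) (fun τ => if τ.1 = q ++ [a] then v else f τ) σ =
            stq (q ++ [a]) f σ := by
          intro f v σ hσ
          show (fun τ : CrStr A => if τ.1 = q ++ [a] then v else f τ) (pcons (q ++ [a]) σ)
            = f (pcons (q ++ [a]) σ)
          have hp : (pcons (q ++ [a]) σ).1 = (q ++ [a]) ++ σ.1 :=
            pcons_of_ne hρch (by rw [hρlast]; exact hσ)
          simp only
          rw [if_neg (by rw [hp]; exact append_ne_self _ σ)]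
        have keyT : ∀ f : StateC A,
            replyB l (stq (q ++ [a]) f) = replyB l' (stq (q ++ [a]) f) ∧
            (l.root ≠ none → l'.root ≠ none →
              applyB l (stq (q ++ [a]) f) = applyB l' (stq (q ++ [a]) f)) := by
          intro f
          set fh : StateC A := fun τ => if τ.1 = q ++ [a] then true else f τ with hfhdef
          have hfρ : fh ρ = true := by rw [hfhdef]; simp [hρdef]
          obtain ⟨e1, e2, e3, e4⟩ := hbrT fh hfρ
          have hRep : replyB l (stq (q ++ [a]) fh) = replyB l' (stq (q ++ [a]) fh) := by
            rw [← e1, ← e3]; exact (H fh).1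
          have hApp : applyB l (stq (q ++ [a]) fh) = applyB l' (stq (q ++ [a]) fh) := by
            rw [← e2, ← e4]; exact (H fh).2
          have t1 := sem_congr l hl (agree f true)
          have t2 := sem_congr l' hl' (agree f true)
          constructor
          · rw [← t1.1, ← t2.1]; exact hRep
          · intro h1 h2
            obtain ⟨c1, hc1⟩ := Option.ne_none_iff_exists'.mp h1
            obtain ⟨c2, hc2⟩ := Option.ne_none_iff_exists'.mp h2
            rw [← t1.2 c1 hc1, ← t2.2 c2 hc2]; exact hApp
        have keyF : ∀ f : StateC A,
            replyB r (stq (q ++ [a]) f) = replyB r' (stq (q ++ [a]) f) ∧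
            (r.root ≠ none → r'.root ≠ none →
              applyB r (stq (q ++ [a]) f) = applyB r' (stq (q ++ [a]) f)) := by
          intro f
          set fh : StateC A := fun τ => if τ.1 = q ++ [a] then false else f τ with hfhdef
          have hfρ : fh ρ = false := by rw [hfhdef]; simp [hρdef]
          obtain ⟨e1, e2, e3, e4⟩ := hbrF fh hfρ
          have hRep : replyB r (stq (q ++ [a]) fh) = replyB r' (stq (q ++ [a]) fh) := by
            rw [← e1, ← e3]; exact (H fh).1
          have hApp : applyB r (stq (q ++ [a]) fh) = applyB r' (stq (q ++ [a]) fh) := by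
            rw [← e2, ← e4]; exact (H fh).2
          have t1 := sem_congr r hr (agree f false)
          have t2 := sem_congr r' hr' (agree f false)
          constructor
          · rw [← t1.1, ← t2.1]; exact hRep
          · intro h1 h2
            obtain ⟨c1, hc1⟩ := Option.ne_none_iff_exists'.mp h1
            obtain ⟨c2, hc2⟩ := Option.ne_none_iff_exists'.mp h2
            rw [← t1.2 c1 hc1, ← t2.2 c2 hc2]; exact hApp
        have hLL : l = l' := by
          apply child_inj hA hρch hρne hρlast l l' hcl hcl' hl hl' ihl true
            (fun f => (keyT f).1) (fun f => (keyT f).2)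
          intro f hfρ
          obtain ⟨_, e2, _, e4⟩ := hbrT f hfρ
          rw [← e2, ← e4]; exact (H f).2
        have hRR : r = r' := by
          apply child_inj hA hρch hρne hρlast r r' hcr hcr' hr hr' ihr false
            (fun f => (keyF f).1) (fun f => (keyF f).2)
          intro f hfρ
          obtain ⟨_, e2, _, e4⟩ := hbrF f hfρ
          rw [← e2, ← e4]; exact (H f).2
        rw [hLL, hRR]
end Main

/-- Soundness and completeness of CP_cr with respect to states on A^cr. -/
theorem cpcr_sound_complete (A : Type) [DecidableEq A] (hA : ∃ a b : A, a ≠ b)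
    (t t' : CE A) :
    Deriv AxCr t t' ↔
      ∀ f : StateC A, replyC t f = replyC t' f ∧ applyC t f = applyC t' f := by
  constructor
  · intro h f
    exact sound h f
  · intro h
    have d1 : Deriv AxCr t (ctr (norm t)).toCE :=
      (deriv_norm t).trans (deriv_ctr (norm t))
    have d2 : Deriv AxCr t' (ctr (norm t')).toCE :=
      (deriv_norm t').trans (deriv_ctr (norm t'))
    have hsem : ∀ f : StateC A,
        replyB (ctr (norm t)) f = replyB (ctr (norm t')) f ∧
        applyB (ctr (norm t)) f = applyB (ctr (norm t')) f := by
      intro f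
      have s1 := sound d1 f
      have s2 := sound d2 f
      have e1 := toCE_sem (ctr (norm t)) f
      have e2 := toCE_sem (ctr (norm t')) f
      constructor
      · rw [← e1.1, ← s1.1, (h f).1, s2.1, e2.1]
      · rw [← e1.2, ← s1.2, (h f).2, s2.2, e2.2]
    have heq : ctr (norm t) = ctr (norm t') := by
      apply bf_inj hA (ctr (norm t)) (ctr (norm t')) [] (ctr_contr _) (ctr_contr _)
        List.isChain_nil (by intro c _ h; simp at h) (by intro c _ h; simp at h)
      intro f
      exact hsem f
    have d2' : Deriv AxCr (ctr (norm t)).toCE t' := by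
      rw [heq]
      exact d2.symm
    exact d1.trans d2'
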